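/- Let q ≥ 2 and h ≥ 1 be integers and let (b_n)_{n≥0} be the sequence with b_0 = 1 and b_n = h(q^n − 1)/(q − 1) for every n ≥ 1 (the effective divisor counts of a global function field of genus 1 and class number h). For every (s, w) ∈ ℂ² with Re(s + w) > 2 and Re(w) > 1, setting u = q^{−(s+w)} and v = q^{−w}, one has Σ_{0 ≤ n ≤ m} b_n b_m q^{−ns} q^{−mw} = Σ_{m=0}^{∞} b_m v^m + (h²/(q−1)²)·[ (1−qu)(1−v)(1−u)q² − (1−q²u)(1−v)(1−u)q − (1−qv)(1−q²u)(1−u)q + (1−qv)(1−q²u)(1−qu) ]·u / ((1−u)(1−qu)(1−q²u)(1−v)(1−qv)). -/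

import Mathlib

open Complex

lemma one_sub_ne_zero_of_norm_lt_one {x : ℂ} (h : ‖x‖ < 1) : 1 - x ≠ 0 := by
  intro h0
  have : x = 1 := by linear_combination -h0
  rw [this] at h; simp at h


lemma summable_const_mul_geom_shift (a r : ℂ) (hr : ‖r‖ < 1) (n : ℕ) :
    Summable (fun k : ℕ => a * r ^ (n + k)) := by
  have : (fun k : ℕ => a * r ^ (n + k)) = fun k => (a * r ^ n) * r ^ k :=
    funext fun k => by rw [pow_add]; ring
  rw [this]
  exact (summable_geometric_of_norm_lt_one hr).mul_left _

lemma tsum_const_mul_geom_shift (a r : ℂ) (hr : ‖r‖ < 1) (n : ℕ) :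
    ∑' k : ℕ, a * r ^ (n + k) = a * r ^ n * (1 - r)⁻¹ := by
  have e : ∀ k : ℕ, a * r ^ (n + k) = (a * r ^ n) * r ^ k :=
    fun k => by rw [pow_add]; ring
  rw [tsum_congr e, tsum_mul_left, tsum_geometric_of_norm_lt_one hr]

set_option maxHeartbeats 2000000 in
lemma final_alg (Q U V C : ℂ) (e1 : 1 - U ≠ 0) (e2 : 1 - Q*U ≠ 0) (e3 : 1 - Q^2*U ≠ 0)
    (e4 : 1 - V ≠ 0) (e5 : 1 - Q*V ≠ 0) :
    (C^2 * (1 - Q*V)⁻¹ * (Q^2*U)) * (1 - Q^2*U)⁻¹ - (C^2 * (1 - Q*V)⁻¹ * (Q*U)) * (1 - Q*U)⁻¹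
      - ((C^2 * (1 - V)⁻¹ * (Q*U)) * (1 - Q*U)⁻¹ - (C^2 * (1 - V)⁻¹ * U) * (1 - U)⁻¹)
    = C^2 * ((1 - Q*U)*(1 - V)*(1 - U)*Q^2 - (1 - Q^2*U)*(1 - V)*(1 - U)*Q
        - (1 - Q*V)*(1 - Q^2*U)*(1 - U)*Q + (1 - Q*V)*(1 - Q^2*U)*(1 - Q*U)) * U
      / ((1 - U)*(1 - Q*U)*(1 - Q^2*U)*(1 - V)*(1 - Q*V)) := by
  rw [eq_div_iff (by simp only [ne_eq, mul_eq_zero]; tauto)]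
  field_simp
  ring

def leEquiv : ℕ × ℕ ≃ {p : ℕ × ℕ // p.1 ≤ p.2} where
  toFun p := ⟨(p.1, p.1 + p.2), Nat.le_add_right _ _⟩
  invFun p := (p.1.1, p.1.2 - p.1.1)
  left_inv p := by simp
  right_inv p := by
    rcases p with ⟨⟨n, m⟩, hnm⟩
    simp [Nat.add_sub_cancel' hnm]

set_option maxHeartbeats 1000000 in
/-- Let `q ≥ 2`, `h ≥ 1` and `(b_n)` the sequence with `b_0 = 1`
and `b_n = h(q^n − 1)/(q − 1)` for `n ≥ 1` (genus-one effective divisor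
counts). For `Re(s+w) > 2`, `Re(w) > 1`, with `u = q^{−(s+w)}` and
`v = q^{−w}`, the double zeta function equals `Z(K, w)` plus the explicit
rational function in `u` and `v` of the paper. -/
theorem double_zeta_genus_one_decomposition
    (q h : ℕ) (hq : 2 ≤ q) (hh : 1 ≤ h)
    (b : ℕ → ℕ) (hb0 : b 0 = 1)
    (hb : ∀ n : ℕ, 1 ≤ n → b n * (q - 1) = h * (q ^ n - 1))
    (s w : ℂ) (h1 : 2 < (s + w).re) (h2 : 1 < w.re)
    (u v : ℂ) (hu : u = (q : ℂ) ^ (-(s + w))) (hv : v = (q : ℂ) ^ (-w)) :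
    (∑' p : {p : ℕ × ℕ // p.1 ≤ p.2},
        (b p.1.1 : ℂ) * (b p.1.2 : ℂ) *
          (q : ℂ) ^ (-(p.1.1 : ℂ) * s) * (q : ℂ) ^ (-(p.1.2 : ℂ) * w)) =
    (∑' m : ℕ, (b m : ℂ) * v ^ m) +
      (h : ℂ) ^ 2 / ((q : ℂ) - 1) ^ 2 *
        ((1 - (q : ℂ) * u) * (1 - v) * (1 - u) * (q : ℂ) ^ 2 -
          (1 - (q : ℂ) ^ 2 * u) * (1 - v) * (1 - u) * (q : ℂ) -
          (1 - (q : ℂ) * v) * (1 - (q : ℂ) ^ 2 * u) * (1 - u) * (q : ℂ) +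
          (1 - (q : ℂ) * v) * (1 - (q : ℂ) ^ 2 * u) * (1 - (q : ℂ) * u)) *
        u /
        ((1 - u) * (1 - (q : ℂ) * u) * (1 - (q : ℂ) ^ 2 * u) * (1 - v) *
          (1 - (q : ℂ) * v)) := by
  have hqR : (1:ℝ) < (q:ℝ) := by exact_mod_cast lt_of_lt_of_le one_lt_two (by exact_mod_cast hq)
  have hqR0 : (0:ℝ) < (q:ℝ) := by linarith
  have hQ0 : (q:ℂ) ≠ 0 := by
    exact_mod_cast Nat.cast_ne_zero.mpr (by omega)
  -- norm of q^(-z)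
  have hnorm : ∀ z : ℂ, ‖(q:ℂ) ^ (-z)‖ = (q:ℝ) ^ (-z.re) := by
    intro z
    have := Complex.norm_cpow_eq_rpow_re_of_pos hqR0 (-z)
    simpa using this
  have hnormv : ‖v‖ < (q:ℝ) ^ (-(1:ℝ)) := by
    rw [hv, hnorm]
    exact (Real.rpow_lt_rpow_left_iff hqR).mpr (by simpa using h2)
  have hnormu : ‖u‖ < (q:ℝ) ^ (-(2:ℝ)) := by
    rw [hu, hnorm]
    exact (Real.rpow_lt_rpow_left_iff hqR).mpr (by simpa using h1)
  have hq1R : (q:ℝ) ^ (-(1:ℝ)) = ((q:ℝ))⁻¹ := by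
    rw [Real.rpow_neg hqR0.le, Real.rpow_one]
  have hq2R : (q:ℝ) ^ (-(2:ℝ)) = ((q:ℝ)^2)⁻¹ := by
    rw [Real.rpow_neg hqR0.le]
    norm_num [Real.rpow_natCast]
  -- basic norm bounds
  have hQnorm : ‖(q:ℂ)‖ = (q:ℝ) := by simp
  have nu : ‖u‖ < 1 := lt_trans hnormu (by rw [hq2R]; rw [inv_lt_one_iff₀]; right; nlinarith)
  have nqu : ‖(q:ℂ) * u‖ < 1 := by
    rw [norm_mul, hQnorm]
    have : ‖u‖ * (q:ℝ)^2 < 1 := by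
      rw [hq2R] at hnormu
      calc ‖u‖ * (q:ℝ)^2 < ((q:ℝ)^2)⁻¹ * (q:ℝ)^2 := by
            apply mul_lt_mul_of_pos_right hnormu; positivity
        _ = 1 := by field_simp
    nlinarith [norm_nonneg u]
  have nq2u : ‖(q:ℂ)^2 * u‖ < 1 := by
    rw [norm_mul, norm_pow, hQnorm]
    rw [hq2R] at hnormu
    calc (q:ℝ)^2 * ‖u‖ < (q:ℝ)^2 * ((q:ℝ)^2)⁻¹ := by
          apply mul_lt_mul_of_pos_left hnormu; positivity
      _ = 1 := by field_simp
  have nv : ‖v‖ < 1 := lt_trans hnormv (by rw [hq1R, inv_lt_one_iff₀]; right; linarith)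
  have nqv : ‖(q:ℂ) * v‖ < 1 := by
    rw [norm_mul, hQnorm]
    rw [hq1R] at hnormv
    calc (q:ℝ) * ‖v‖ < (q:ℝ) * ((q:ℝ))⁻¹ := by
          apply mul_lt_mul_of_pos_left hnormv; positivity
      _ = 1 := by field_simp
  -- nonvanishing denominators
  have d1 : (1:ℂ) - u ≠ 0 := one_sub_ne_zero_of_norm_lt_one nu
  have d2 : (1:ℂ) - (q:ℂ) * u ≠ 0 := one_sub_ne_zero_of_norm_lt_one nqu
  have d3 : (1:ℂ) - (q:ℂ)^2 * u ≠ 0 := one_sub_ne_zero_of_norm_lt_one nq2u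
  have d4 : (1:ℂ) - v ≠ 0 := one_sub_ne_zero_of_norm_lt_one nv
  have d5 : (1:ℂ) - (q:ℂ) * v ≠ 0 := one_sub_ne_zero_of_norm_lt_one nqv
  have dq : (q:ℂ) - 1 ≠ 0 := by
    intro h0
    have : (q:ℂ) = 1 := by linear_combination h0
    have : q = 1 := by exact_mod_cast this
    omega
  -- b over ℂ
  set c : ℂ := (h:ℂ) / ((q:ℂ) - 1) with hc
  have bC : ∀ n : ℕ, 1 ≤ n → (b n : ℂ) = c * ((q:ℂ)^n - 1) := by
    intro n hn
    have h1q : 1 ≤ q := by omega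
    have h1qn : 1 ≤ q ^ n := Nat.one_le_pow _ _ (by omega)
    have h2 := congrArg (fun x : ℕ => (x:ℂ)) (hb n hn)
    push_cast [Nat.cast_sub h1q, Nat.cast_sub h1qn] at h2
    rw [hc]
    field_simp
    linear_combination h2
  -- bound on b
  have bBound : ∀ n : ℕ, (b n : ℝ) ≤ (h:ℝ) * (q:ℝ)^n := by
    intro n
    rcases Nat.eq_zero_or_pos n with rfl | hn
    · simp [hb0]; exact_mod_cast hh
    · have key : b n * (q-1) ≤ (h * q^n) * (q-1) := by
        rw [hb n hn]
        have : q^n - 1 ≤ q^n * (q-1) := by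
          have h1 : 1 ≤ q - 1 := by omega
          calc q^n - 1 ≤ q^n := Nat.sub_le _ _
            _ = q^n * 1 := (mul_one _).symm
            _ ≤ q^n * (q-1) := Nat.mul_le_mul_left _ h1
        calc h * (q^n - 1) ≤ h * (q^n * (q-1)) := Nat.mul_le_mul_left h this
          _ = h * q^n * (q-1) := (mul_assoc _ _ _).symm
      have : b n ≤ h * q^n := Nat.le_of_mul_le_mul_right key (by omega)
      exact_mod_cast this
  -- main computation
  set X : ℂ := (q:ℂ) ^ (-s) with hX
  have huXv : u = X * v := by
    rw [hu, hX, hv, show -(s+w) = -s + -w by ring, Complex.cpow_add _ _ hQ0]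
  set F : ℕ × ℕ → ℂ :=
    fun p => (b p.1 : ℂ) * (b (p.1 + p.2) : ℂ) * X ^ p.1 * v ^ (p.1 + p.2) with hFdef
  -- rewrite LHS as a sum over ℕ × ℕ
  have eq1 : (∑' p : {p : ℕ × ℕ // p.1 ≤ p.2},
        (b p.1.1 : ℂ) * (b p.1.2 : ℂ) *
          (q : ℂ) ^ (-(p.1.1 : ℂ) * s) * (q : ℂ) ^ (-(p.1.2 : ℂ) * w)) =
      ∑' p : ℕ × ℕ, F p := by
    rw [← Equiv.tsum_eq leEquiv]
    apply tsum_congr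
    rintro ⟨n, k⟩
    have c1 : (q:ℂ) ^ (-(n : ℂ) * s) = X ^ n := by
      rw [show (-(n:ℂ) * s) = (n : ℂ) * (-s) by ring, Complex.cpow_nat_mul]
    have c2 : (q:ℂ) ^ (-((n + k : ℕ) : ℂ) * w) = v ^ (n + k) := by
      rw [show (-((n + k : ℕ):ℂ) * w) = ((n + k : ℕ) : ℂ) * (-w) by ring,
        Complex.cpow_nat_mul, hv]
    simp only [hFdef, leEquiv, Equiv.coe_fn_mk]
    rw [c1, c2]
  -- summability of F
  have hA1 : (q:ℝ)^2 * ‖u‖ < 1 := by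
    have : ‖(q:ℂ)^2 * u‖ = (q:ℝ)^2 * ‖u‖ := by simp [norm_mul]
    linarith [nq2u, this.symm.le, this.le]
  have hB1 : (q:ℝ) * ‖v‖ < 1 := by
    have : ‖(q:ℂ) * v‖ = (q:ℝ) * ‖v‖ := by simp [norm_mul]
    linarith [nqv, this.le]
  have hnormuXv : ‖u‖ = ‖X‖ * ‖v‖ := by rw [huXv, norm_mul]
  have hFs : Summable F := by
    apply Summable.of_norm_bounded
      (g := fun p : ℕ × ℕ => ((h:ℝ)^2 * ((q:ℝ)^2 * ‖u‖)^p.1) * (((q:ℝ) * ‖v‖)^p.2))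
    · exact Summable.mul_of_nonneg
        ((summable_geometric_of_lt_one (by positivity) hA1).mul_left _)
        (summable_geometric_of_lt_one (by positivity) hB1)
        (fun n => by positivity) (fun k => by positivity)
    · rintro ⟨n, k⟩
      have hFnorm : ‖F (n, k)‖ =
          (b n : ℝ) * (b (n + k) : ℝ) * ‖X‖ ^ n * ‖v‖ ^ (n + k) := by
        simp [hFdef, norm_mul, norm_pow]
      have hkey : ((h:ℝ)^2 * ((q:ℝ)^2 * ‖u‖)^n) * (((q:ℝ) * ‖v‖)^k) =
          ((h:ℝ) * (q:ℝ)^n * ‖X‖^n) * ((h:ℝ) * (q:ℝ)^(n+k) * ‖v‖^(n+k)) := by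
        rw [hnormuXv]
        simp only [mul_pow, pow_add]
        ring
      rw [hFnorm, hkey]
      have b1 := bBound n
      have b2 := bBound (n + k)
      calc (b n : ℝ) * (b (n + k) : ℝ) * ‖X‖ ^ n * ‖v‖ ^ (n + k)
          = ((b n : ℝ) * ‖X‖^n) * ((b (n+k) : ℝ) * ‖v‖^(n+k)) := by ring
        _ ≤ (((h:ℝ) * (q:ℝ)^n) * ‖X‖^n) * (((h:ℝ) * (q:ℝ)^(n+k)) * ‖v‖^(n+k)) := by
            apply mul_le_mul
            · exact mul_le_mul_of_nonneg_right b1 (by positivity)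
            · exact mul_le_mul_of_nonneg_right b2 (by positivity)
            · positivity
            · positivity
        _ = ((h:ℝ) * (q:ℝ)^n * ‖X‖^n) * ((h:ℝ) * (q:ℝ)^(n+k) * ‖v‖^(n+k)) := by ring
  -- iterated sum
  set T : ℕ → ℂ := fun n => ∑' k : ℕ, (b (n + k) : ℂ) * v ^ (n + k) with hT
  set g : ℕ → ℂ := fun n => (b n : ℂ) * X ^ n * T n with hg
  have eq2 : (∑' p : ℕ × ℕ, F p) = ∑' n : ℕ, g n := by
    rw [Summable.tsum_prod' hFs hFs.prod_factor]
    apply tsum_congr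
    intro n
    rw [hg]
    simp only
    rw [hT]
    simp only
    rw [← tsum_mul_left]
    apply tsum_congr
    intro k
    simp only [hFdef]
    ring
  -- evaluate T n for n ≥ 1
  have hTn : ∀ n : ℕ, 1 ≤ n →
      T n = c * ((q:ℂ)*v)^n * (1 - (q:ℂ)*v)⁻¹ - c * v^n * (1 - v)⁻¹ := by
    intro n hn
    have e1 : ∀ k : ℕ, (b (n + k) : ℂ) * v ^ (n + k) =
        c * ((q:ℂ)*v) ^ (n + k) - c * v ^ (n + k) := by
      intro k
      rw [bC (n + k) (by omega), mul_pow]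
      ring
    rw [hT]
    simp only
    rw [tsum_congr e1,
      Summable.tsum_sub (summable_const_mul_geom_shift c _ nqv n)
        (summable_const_mul_geom_shift c _ nv n),
      tsum_const_mul_geom_shift c _ nqv n, tsum_const_mul_geom_shift c _ nv n]
  -- closed form for g at positive indices
  set G : ℕ → ℂ := fun n => c^2 * ((1 - (q:ℂ)*v)⁻¹ * (((q:ℂ)^2*u)^n - ((q:ℂ)*u)^n)
      - (1 - v)⁻¹ * (((q:ℂ)*u)^n - u^n)) with hG
  have hgG : ∀ n : ℕ, 1 ≤ n → g n = G n := by
    intro n hn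
    rw [hg, hG]
    simp only
    rw [bC n hn, hTn n hn, huXv]
    ring
  have s1 : Summable fun n : ℕ => ((q:ℂ)^2*u)^n := summable_geometric_of_norm_lt_one nq2u
  have s2 : Summable fun n : ℕ => ((q:ℂ)*u)^n := summable_geometric_of_norm_lt_one nqu
  have s3 : Summable fun n : ℕ => u^n := summable_geometric_of_norm_lt_one nu
  have hGsum : Summable G := by
    rw [hG]
    exact (((s1.sub s2).mul_left _).sub ((s2.sub s3).mul_left _)).mul_left _
  have hgsum : Summable g := by
    rw [← summable_nat_add_iff 1]
    exact (((summable_nat_add_iff 1).mpr hGsum).congr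
      (fun n => (hgG (n + 1) (by omega)).symm))
  have eq3 : (∑' n : ℕ, g n) = g 0 + ∑' n : ℕ, g (n + 1) := Summable.tsum_eq_zero_add hgsum
  have hg0 : g 0 = ∑' m : ℕ, (b m : ℂ) * v ^ m := by
    rw [hg, hT]
    simp [hb0]
  -- evaluate the shifted sum
  have eq4 : (∑' n : ℕ, g (n + 1)) =
      ((c^2 * (1 - (q:ℂ)*v)⁻¹ * ((q:ℂ)^2*u)) * (1 - (q:ℂ)^2*u)⁻¹
        - (c^2 * (1 - (q:ℂ)*v)⁻¹ * ((q:ℂ)*u)) * (1 - (q:ℂ)*u)⁻¹)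
      - ((c^2 * (1 - v)⁻¹ * ((q:ℂ)*u)) * (1 - (q:ℂ)*u)⁻¹
        - (c^2 * (1 - v)⁻¹ * u) * (1 - u)⁻¹) := by
    have eG : ∀ n : ℕ, g (n + 1) =
        ((c^2 * (1 - (q:ℂ)*v)⁻¹ * ((q:ℂ)^2*u)) * ((q:ℂ)^2*u)^n
          - (c^2 * (1 - (q:ℂ)*v)⁻¹ * ((q:ℂ)*u)) * ((q:ℂ)*u)^n)
        - ((c^2 * (1 - v)⁻¹ * ((q:ℂ)*u)) * ((q:ℂ)*u)^n
          - (c^2 * (1 - v)⁻¹ * u) * u^n) := by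
      intro n
      rw [hgG (n + 1) (by omega), hG]
      simp only [pow_succ]
      ring
    rw [tsum_congr eG,
      Summable.tsum_sub (((s1.mul_left _).sub (s2.mul_left _))) (((s2.mul_left _).sub (s3.mul_left _))),
      Summable.tsum_sub (s1.mul_left _) (s2.mul_left _), Summable.tsum_sub (s2.mul_left _) (s3.mul_left _),
      tsum_mul_left, tsum_mul_left, tsum_mul_left, tsum_mul_left,
      tsum_geometric_of_norm_lt_one nq2u, tsum_geometric_of_norm_lt_one nqu,
      tsum_geometric_of_norm_lt_one nu]
  rw [eq1, eq2, eq3, hg0, eq4]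
  congr 1
  rw [show (h:ℂ)^2/((q:ℂ)-1)^2 = c^2 by rw [hc, div_pow]]
  exact final_alg (q:ℂ) u v c d1 d2 d3 d4 d5
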